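/- arXiv:0805.1284 — 4 statements merged into one kernel-verified Lean document; each statement's English description precedes it below -/
import Mathlib

section
/- Let T^ν be the ν-dimensional torus, w2 : (T^ν)² → ℝ, w3 : (T^ν)³ → ℝ and v3 : T^ν → ℝ be continuous functions. Fix p, q ∈ T^ν and let h3(p,q) be the bounded self-adjoint operator on ℂ ⊕ L²(T^ν) given by h3(p,q)(f0, f1) = (w2(p,q) f0 + ∫_{T^ν} v3(s) f1(s) ds, t ↦ v3(t) f0 + w3(p,q,t) f1(t)). Then for any z ∈ ℂ with z ∉ [min_t w3(p,q,t), max_t w3(p,q,t)], z is an eigenvalue of h3(p,q) if and only if Δ3(p,q;z) := w2(p,q) − z − ∫_{T^ν} v3(s)²/(w3(p,q,s) − z) ds = 0. -/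
open MeasureTheory

noncomputable section

instance : Fact (0 < 2 * Real.pi) := ⟨by positivity⟩

/-- The ν-dimensional torus with normalized Haar (Lebesgue) measure. -/
abbrev Torus (ν : ℕ) := Fin ν → AddCircle (2 * Real.pi)

/-- `L²(T^ν)`. -/
abbrev L2T (ν : ℕ) := Lp ℂ 2 (volume : Measure (Torus ν))

lemma cont_memLp {ν : ℕ} (r : ENNReal) (f : Torus ν → ℂ) (hf : Continuous f) :
    MemLp f r (volume : Measure (Torus ν)) := by
  obtain ⟨C, hC⟩ := (isCompact_range (hf.norm)).bddAbove
  exact MemLp.of_bound hf.aestronglyMeasurable C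
    (ae_of_all _ fun x => hC (Set.mem_range_self x))

lemma cont_integrable {ν : ℕ} (f : Torus ν → ℂ) (hf : Continuous f) :
    Integrable f (volume : Measure (Torus ν)) :=
  memLp_one_iff_integrable.mp (cont_memLp 1 f hf)

/-- For `z` outside the interval `[min_t w3(p,q,t), max_t w3(p,q,t)]`, `z` is an eigenvalue of the
generalized Friedrichs model `h3(p,q)` iff the Fredholm determinant `Δ3(p,q;z)` vanishes. -/
theorem eigenvalue_iff_fredholm_determinant_eq_zero
    (ν : ℕ) (w2 : Torus ν → Torus ν → ℝ) (w3 : Torus ν → Torus ν → Torus ν → ℝ)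
    (v3 : Torus ν → ℝ)
    (hw2 : Continuous fun x : Torus ν × Torus ν => w2 x.1 x.2)
    (hw3 : Continuous fun x : Torus ν × Torus ν × Torus ν => w3 x.1 x.2.1 x.2.2)
    (hv3 : Continuous v3)
    (p q : Torus ν)
    (h3 : (ℂ × L2T ν) →L[ℂ] (ℂ × L2T ν))
    (hact : ∀ f : ℂ × L2T ν,
      (h3 f).1 = (w2 p q : ℂ) * f.1 + ∫ s, (v3 s : ℂ) * f.2 s ∧
      ((h3 f).2 : Torus ν → ℂ) =ᵐ[volume]
        fun t => (v3 t : ℂ) * f.1 + (w3 p q t : ℂ) * f.2 t)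
    (z : ℂ)
    (hz : z ∉ Complex.ofReal '' Set.Icc (⨅ t, w3 p q t) (⨆ t, w3 p q t)) :
    (∃ f : ℂ × L2T ν, f ≠ 0 ∧ h3 f = z • f) ↔
      (w2 p q : ℂ) - z - ∫ s, (v3 s : ℂ) ^ 2 / ((w3 p q s : ℂ) - z) = 0 := by
  have hw3c : Continuous fun t => w3 p q t :=
    hw3.comp (continuous_const.prodMk (continuous_const.prodMk continuous_id))
  -- the denominators are nonzero
  have hne : ∀ t, z - (w3 p q t : ℂ) ≠ 0 := by
    intro t h
    apply hz
    refine ⟨w3 p q t, ⟨?_, ?_⟩, (sub_eq_zero.mp h).symm⟩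
    · exact ciInf_le (isCompact_range hw3c).bddBelow t
    · exact le_ciSup (isCompact_range hw3c).bddAbove t
  -- the resolvent-type function
  set g : Torus ν → ℂ := fun t => (v3 t : ℂ) / (z - (w3 p q t : ℂ)) with hgdef
  have hgc : Continuous g := by
    apply Continuous.div
    · exact Complex.continuous_ofReal.comp hv3
    · exact continuous_const.sub (Complex.continuous_ofReal.comp hw3c)
    · exact fun t => hne t
  have hIc : Continuous fun s => (v3 s : ℂ) ^ 2 / (z - (w3 p q s : ℂ)) := by
    apply Continuous.div
    · exact (Complex.continuous_ofReal.comp hv3).pow 2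
    · exact continuous_const.sub (Complex.continuous_ofReal.comp hw3c)
    · exact fun t => hne t
  set I : ℂ := ∫ s, (v3 s : ℂ) ^ 2 / (z - (w3 p q s : ℂ)) with hIdef
  have hflip : (∫ s, (v3 s : ℂ) ^ 2 / ((w3 p q s : ℂ) - z)) = -I := by
    rw [hIdef, ← integral_neg]
    congr 1; funext s
    rw [← div_neg, neg_sub]
  rw [hflip]
  constructor
  · rintro ⟨f, hf0, hfz⟩
    obtain ⟨h1, h2⟩ := hact f
    have hz1 : (h3 f).1 = z * f.1 := by rw [hfz]; rfl
    have hz2 : ((h3 f).2 : Torus ν → ℂ) =ᵐ[volume] fun t => z * f.2 t := by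
      rw [hfz]
      exact (Lp.coeFn_smul z f.2)
    -- f.2 is a.e. equal to f.1 • g
    have hf2 : (f.2 : Torus ν → ℂ) =ᵐ[volume] fun t => f.1 * g t := by
      filter_upwards [h2, hz2] with t ht hzt
      have hteq : (v3 t : ℂ) * f.1 + (w3 p q t : ℂ) * f.2 t = z * f.2 t := by
        rw [← ht, hzt]
      rw [hgdef]
      rw [show f.1 * ((v3 t : ℂ) / (z - (w3 p q t : ℂ))) =
        f.1 * (v3 t : ℂ) / (z - (w3 p q t : ℂ)) from (mul_div_assoc _ _ _).symm]
      rw [eq_div_iff (hne t)]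
      linear_combination -hteq
    have hf1 : f.1 ≠ 0 := by
      intro hf1
      apply hf0
      have : f.2 = 0 := by
        apply Lp.ext
        filter_upwards [hf2] with t ht
        simp [ht, hf1, Lp.coeFn_zero]
      · exact Prod.ext hf1 (by simpa using this)
    -- compute the integral
    have hint : (∫ s, (v3 s : ℂ) * f.2 s) = f.1 * I := by
      rw [hIdef, ← integral_const_mul]
      apply integral_congr_ae
      filter_upwards [hf2] with s hs
      rw [hs, hgdef]
      ring
    rw [h1, hint] at hz1
    have : f.1 * ((w2 p q : ℂ) - z + I) = 0 := by linear_combination hz1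
    rcases mul_eq_zero.mp this with h | h
    · exact absurd h hf1
    · linear_combination h
  · intro hΔ
    have hgm : MemLp g 2 (volume : Measure (Torus ν)) := cont_memLp 2 g hgc
    set f1 : L2T ν := hgm.toLp g with hf1def
    have hf1g : (f1 : Torus ν → ℂ) =ᵐ[volume] g := MemLp.coeFn_toLp hgm
    refine ⟨(1, f1), ?_, ?_⟩
    · intro h
      exact one_ne_zero (congrArg Prod.fst h)
    · obtain ⟨h1, h2⟩ := hact (1, f1)
      have key1 : (h3 (1, f1)).1 = z := by
        rw [h1]
        have : (∫ s, (v3 s : ℂ) * ((1, f1) : ℂ × L2T ν).2 s) = I := by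
          rw [hIdef]
          apply integral_congr_ae
          filter_upwards [hf1g] with s hs
          simp only [hs, hgdef]
          ring
        rw [this]
        simp only [mul_one]
        linear_combination hΔ
      have key2 : (h3 (1, f1)).2 = z • f1 := by
        apply Lp.ext
        filter_upwards [h2, hf1g, Lp.coeFn_smul z f1] with t ht hgt hst
        rw [ht, hst]
        simp only [Pi.smul_apply, smul_eq_mul, hgt, mul_one]
        have hc : (z - (w3 p q t : ℂ)) * g t = (v3 t : ℂ) := by
          rw [hgdef]
          exact mul_div_cancel₀ _ (hne t)
        linear_combination -hc
      have : (z • ((1, f1) : ℂ × L2T ν)) = (z * 1, z • f1) := rfl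
      rw [this]
      exact Prod.ext (by rw [key1]; ring) key2
end
end

section
/- Let H be a bounded self-adjoint 2×2 block operator matrix H = [[A, B],[B*, C]] on the orthogonal direct sum H₁ ⊕ H₂ of Hilbert spaces, where A : H₁ → H₁ and C : H₂ → H₂ are bounded self-adjoint and B : H₂ → H₁ is bounded. Then for every λ ∉ σ(C), λ ∈ σ(H) if and only if 0 ∈ σ(L(λ)), where L(λ) := A − λI − B (C − λI)⁻¹ B* is a bounded self-adjoint operator on H₁ (Frobenius–Schur complement characterization of the spectrum). -/
noncomputable section

open ContinuousLinearMap

section Blk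

set_option linter.unusedSectionVars false
set_option maxHeartbeats 1000000

variable {H₁ H₂ : Type*}
    [NormedAddCommGroup H₁] [InnerProductSpace ℂ H₁] [CompleteSpace H₁]
    [NormedAddCommGroup H₂] [InnerProductSpace ℂ H₂] [CompleteSpace H₂]

def blk (P : H₁ →L[ℂ] H₁) (Q : H₂ →L[ℂ] H₁) (R : H₁ →L[ℂ] H₂) (S : H₂ →L[ℂ] H₂) :
    WithLp 2 (H₁ × H₂) →L[ℂ] WithLp 2 (H₁ × H₂) :=
  (WithLp.prodContinuousLinearEquiv 2 ℂ H₁ H₂).symm.toContinuousLinearMap ∘L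
    (((P ∘L ContinuousLinearMap.fst ℂ H₁ H₂) + (Q ∘L ContinuousLinearMap.snd ℂ H₁ H₂)).prod
      ((R ∘L ContinuousLinearMap.fst ℂ H₁ H₂) + (S ∘L ContinuousLinearMap.snd ℂ H₁ H₂))) ∘L
    (WithLp.prodContinuousLinearEquiv 2 ℂ H₁ H₂).toContinuousLinearMap

lemma blk_apply (P : H₁ →L[ℂ] H₁) (Q : H₂ →L[ℂ] H₁) (R : H₁ →L[ℂ] H₂) (S : H₂ →L[ℂ] H₂)
    (x : WithLp 2 (H₁ × H₂)) :
    (WithLp.equiv 2 (H₁ × H₂)) (blk P Q R S x) =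
      (P ((WithLp.equiv 2 (H₁ × H₂)) x).1 + Q ((WithLp.equiv 2 (H₁ × H₂)) x).2,
       R ((WithLp.equiv 2 (H₁ × H₂)) x).1 + S ((WithLp.equiv 2 (H₁ × H₂)) x).2) := rfl

lemma blk_mul (P P' : H₁ →L[ℂ] H₁) (Q Q' : H₂ →L[ℂ] H₁) (R R' : H₁ →L[ℂ] H₂)
    (S S' : H₂ →L[ℂ] H₂) :
    blk P Q R S * blk P' Q' R' S' =
      blk (P ∘L P' + Q ∘L R') (P ∘L Q' + Q ∘L S') (R ∘L P' + S ∘L R') (R ∘L Q' + S ∘L S') := by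
  ext x
  refine (WithLp.equiv 2 (H₁ × H₂)).injective ?_
  show (WithLp.equiv 2 (H₁ × H₂)) (blk P Q R S (blk P' Q' R' S' x)) = _
  rw [blk_apply, blk_apply, blk_apply]
  simp only [add_apply, comp_apply, map_add, Prod.mk.injEq]
  exact ⟨by abel, by abel⟩

lemma blk_one : blk (1 : H₁ →L[ℂ] H₁) 0 0 (1 : H₂ →L[ℂ] H₂) = 1 := by
  ext x
  refine (WithLp.equiv 2 (H₁ × H₂)).injective ?_
  rw [blk_apply]
  simp only [one_apply, zero_apply, add_zero, zero_add]
  rfl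

lemma blk_sub (P P' : H₁ →L[ℂ] H₁) (Q Q' : H₂ →L[ℂ] H₁) (R R' : H₁ →L[ℂ] H₂)
    (S S' : H₂ →L[ℂ] H₂) :
    blk P Q R S - blk P' Q' R' S' = blk (P - P') (Q - Q') (R - R') (S - S') := by
  ext x
  refine (WithLp.equiv 2 (H₁ × H₂)).injective ?_
  show (WithLp.equiv 2 (H₁ × H₂)) (blk P Q R S x - blk P' Q' R' S' x) = _
  rw [show ∀ a b : WithLp 2 (H₁ × H₂), WithLp.equiv 2 (H₁ × H₂) (a - b) =
      WithLp.equiv 2 (H₁ × H₂) a - WithLp.equiv 2 (H₁ × H₂) b from fun _ _ => rfl, blk_apply, blk_apply, blk_apply]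
  simp only [Prod.mk_sub_mk, Prod.mk.injEq, sub_apply]
  exact ⟨by abel, by abel⟩

lemma blk_smul_one (lam : ℂ) :
    blk (lam • (1 : H₁ →L[ℂ] H₁)) 0 0 (lam • (1 : H₂ →L[ℂ] H₂)) =
      lam • (1 : WithLp 2 (H₁ × H₂) →L[ℂ] WithLp 2 (H₁ × H₂)) := by
  ext x
  refine (WithLp.equiv 2 (H₁ × H₂)).injective ?_
  rw [blk_apply]
  simp only [smul_apply, one_apply, zero_apply, add_zero, zero_add]
  rfl

lemma blk_tri_unit (X : H₂ →L[ℂ] H₁) : IsUnit (blk 1 X 0 1) := by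
  have h : ∀ Y : H₂ →L[ℂ] H₁, blk (1:H₁ →L[ℂ] H₁) Y 0 (1:H₂ →L[ℂ] H₂) * blk 1 (-Y) 0 1 = 1 := by
    intro Y
    ext x
    refine (WithLp.equiv 2 (H₁ × H₂)).injective ?_
    show (WithLp.equiv 2 (H₁ × H₂)) (blk 1 Y 0 1 (blk 1 (-Y) 0 1 x)) =
      (WithLp.equiv 2 (H₁ × H₂)) x
    rw [blk_apply, blk_apply]
    simp only [one_apply, zero_apply, add_zero, zero_add, neg_apply, map_add, map_neg]
    refine Prod.ext ?_ ?_ <;> simp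
  exact ⟨⟨blk 1 X 0 1, blk 1 (-X) 0 1, h X, by simpa using h (-X)⟩, rfl⟩

lemma blk_tri_unit' (X : H₁ →L[ℂ] H₂) : IsUnit (blk 1 0 X 1) := by
  have h : ∀ Y : H₁ →L[ℂ] H₂, blk (1:H₁ →L[ℂ] H₁) 0 Y (1:H₂ →L[ℂ] H₂) * blk 1 0 (-Y) 1 = 1 := by
    intro Y
    ext x
    refine (WithLp.equiv 2 (H₁ × H₂)).injective ?_
    show (WithLp.equiv 2 (H₁ × H₂)) (blk 1 0 Y 1 (blk 1 0 (-Y) 1 x)) =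
      (WithLp.equiv 2 (H₁ × H₂)) x
    rw [blk_apply, blk_apply]
    simp only [one_apply, zero_apply, add_zero, zero_add, neg_apply, map_add, map_neg]
    refine Prod.ext ?_ ?_ <;> simp
  exact ⟨⟨blk 1 0 X 1, blk 1 0 (-X) 1, h X, by simpa using h (-X)⟩, rfl⟩

end Blk

section Blk2

set_option linter.unusedSectionVars false
set_option maxHeartbeats 1000000

variable {H₁ H₂ : Type*}
    [NormedAddCommGroup H₁] [InnerProductSpace ℂ H₁] [CompleteSpace H₁]
    [NormedAddCommGroup H₂] [InnerProductSpace ℂ H₂] [CompleteSpace H₂]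

lemma blk_diag_mul (L L' : H₁ →L[ℂ] H₁) (c c' : H₂ →L[ℂ] H₂) :
    blk L 0 0 c * blk L' 0 0 c' = blk (L * L') 0 0 (c * c') := by
  ext x
  refine (WithLp.equiv 2 (H₁ × H₂)).injective ?_
  show (WithLp.equiv 2 (H₁ × H₂)) (blk L 0 0 c (blk L' 0 0 c' x)) = _
  rw [blk_apply, blk_apply, blk_apply]
  simp only [ContinuousLinearMap.zero_apply, add_zero, zero_add, ContinuousLinearMap.mul_apply]

lemma blk_diag_unit {L : H₁ →L[ℂ] H₁} {c : H₂ →L[ℂ] H₂} (hL : IsUnit L) (hc : IsUnit c) :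
    IsUnit (blk L 0 0 c) := by
  refine ⟨⟨blk L 0 0 c, blk ↑hL.unit⁻¹ 0 0 ↑hc.unit⁻¹, ?_, ?_⟩, rfl⟩
  · rw [blk_diag_mul, hL.mul_val_inv, hc.mul_val_inv, blk_one]
  · rw [blk_diag_mul, hL.val_inv_mul, hc.val_inv_mul, blk_one]

/-- projection onto the first coordinate -/
def pi1 : WithLp 2 (H₁ × H₂) →L[ℂ] H₁ :=
  (ContinuousLinearMap.fst ℂ H₁ H₂) ∘L
    (WithLp.prodContinuousLinearEquiv 2 ℂ H₁ H₂).toContinuousLinearMap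

/-- injection of the first coordinate -/
def io1 : H₁ →L[ℂ] WithLp 2 (H₁ × H₂) :=
  (WithLp.prodContinuousLinearEquiv 2 ℂ H₁ H₂).symm.toContinuousLinearMap ∘L
    (ContinuousLinearMap.inl ℂ H₁ H₂)

lemma pi1_blk (L : H₁ →L[ℂ] H₁) (c : H₂ →L[ℂ] H₂) :
    (pi1 : WithLp 2 (H₁ × H₂) →L[ℂ] H₁) ∘L blk L 0 0 c = L ∘L pi1 := by
  ext x
  show ((WithLp.equiv 2 (H₁ × H₂)) (blk L 0 0 c x)).1 = _
  rw [blk_apply]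
  simp only [ContinuousLinearMap.zero_apply, add_zero]
  rfl

lemma blk_io1 (L : H₁ →L[ℂ] H₁) (c : H₂ →L[ℂ] H₂) :
    blk L 0 0 c ∘L (io1 : H₁ →L[ℂ] WithLp 2 (H₁ × H₂)) = io1 ∘L L := by
  ext u
  refine (WithLp.equiv 2 (H₁ × H₂)).injective ?_
  show (WithLp.equiv 2 (H₁ × H₂)) (blk L 0 0 c (io1 u)) = _
  rw [blk_apply]
  have h1 : ((WithLp.equiv 2 (H₁ × H₂)) (io1 u)).1 = u := rfl
  have h2 : ((WithLp.equiv 2 (H₁ × H₂)) (io1 u)).2 = (0 : H₂) := rfl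
  rw [h1, h2, map_zero c]
  simp only [ContinuousLinearMap.zero_apply, add_zero, zero_add]
  rfl

lemma pi1_io1 : (pi1 : WithLp 2 (H₁ × H₂) →L[ℂ] H₁) ∘L io1 = 1 := rfl

lemma blk_diag_unit_fst {L : H₁ →L[ℂ] H₁} {c : H₂ →L[ℂ] H₂}
    (hD : IsUnit (blk L 0 0 c)) : IsUnit L := by
  set D := blk L 0 0 c with hDdef
  set X : WithLp 2 (H₁ × H₂) →L[ℂ] WithLp 2 (H₁ × H₂) := ↑hD.unit⁻¹ with hX
  have hDX : D * X = 1 := hD.mul_val_inv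
  have hXD : X * D = 1 := hD.val_inv_mul
  have hpD : ∀ z, (pi1 : WithLp 2 (H₁ × H₂) →L[ℂ] H₁) (D z) = L (pi1 z) := fun z =>
    ContinuousLinearMap.ext_iff.1 (pi1_blk L c) z
  have hiD : ∀ u, D (io1 u) = io1 (L u) := fun u =>
    ContinuousLinearMap.ext_iff.1 (blk_io1 L c) u
  have hDXz : ∀ z, D (X z) = z := fun z => ContinuousLinearMap.ext_iff.1 hDX z
  have hXDz : ∀ z, X (D z) = z := fun z => ContinuousLinearMap.ext_iff.1 hXD z
  refine ⟨⟨L, pi1 ∘L X ∘L io1, ?_, ?_⟩, rfl⟩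
  · ext u
    show L (pi1 (X (io1 u))) = u
    rw [← hpD (X (io1 u)), hDXz (io1 u)]
    rfl
  · ext u
    show pi1 (X (io1 (L u))) = u
    rw [← hiD u, hXDz (io1 u)]
    rfl

end Blk2

section Helpers

variable {H₁ H₂ : Type*}
    [NormedAddCommGroup H₁] [InnerProductSpace ℂ H₁]
    [NormedAddCommGroup H₂] [InnerProductSpace ℂ H₂]

lemma oneComp (f : H₂ →L[ℂ] H₁) : (1 : H₁ →L[ℂ] H₁) ∘L f = f := rfl

lemma compOne (f : H₂ →L[ℂ] H₁) : f ∘L (1 : H₂ →L[ℂ] H₂) = f := rfl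

end Helpers

set_option maxHeartbeats 1000000 in
/-- Frobenius–Schur complement characterization of the spectrum of a self-adjoint 2×2 block
operator matrix: for `λ ∉ σ(C)`, `λ ∈ σ(H)` iff `0 ∈ σ(A − λ − B (C − λ)⁻¹ B*)`. -/
theorem spectrum_block_matrix_iff_schur_complement
    {H₁ H₂ : Type*}
    [NormedAddCommGroup H₁] [InnerProductSpace ℂ H₁] [CompleteSpace H₁]
    [NormedAddCommGroup H₂] [InnerProductSpace ℂ H₂] [CompleteSpace H₂]
    (A : H₁ →L[ℂ] H₁) (C : H₂ →L[ℂ] H₂) (B : H₂ →L[ℂ] H₁)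
    (hA : IsSelfAdjoint A) (hC : IsSelfAdjoint C)
    (H : WithLp 2 (H₁ × H₂) →L[ℂ] WithLp 2 (H₁ × H₂))
    (hH : ∀ x : WithLp 2 (H₁ × H₂),
      (WithLp.equiv 2 (H₁ × H₂)) (H x) =
        (A ((WithLp.equiv 2 (H₁ × H₂)) x).1 + B ((WithLp.equiv 2 (H₁ × H₂)) x).2,
         ContinuousLinearMap.adjoint B ((WithLp.equiv 2 (H₁ × H₂)) x).1 +
           C ((WithLp.equiv 2 (H₁ × H₂)) x).2))
    (lam : ℂ) (hlam : lam ∉ spectrum ℂ C) :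
    lam ∈ spectrum ℂ H ↔
      (0 : ℂ) ∈ spectrum ℂ
        (A - lam • (1 : H₁ →L[ℂ] H₁) -
          B ∘L Ring.inverse (C - lam • (1 : H₂ →L[ℂ] H₂)) ∘L ContinuousLinearMap.adjoint B) := by
  have hCu : IsUnit (C - lam • (1 : H₂ →L[ℂ] H₂)) := by
    have h0 := spectrum.notMem_iff.mp hlam
    rw [Algebra.algebraMap_eq_smul_one] at h0
    simpa [neg_sub] using h0.neg
  set Ci := Ring.inverse (C - lam • (1 : H₂ →L[ℂ] H₂)) with hCidef
  have hCi1 : Ci * (C - lam • 1) = 1 := Ring.inverse_mul_cancel _ hCu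
  have hCi2 : (C - lam • 1) * Ci = 1 := Ring.mul_inverse_cancel _ hCu
  set Bs := ContinuousLinearMap.adjoint B with hBsdef
  set L := A - lam • (1 : H₁ →L[ℂ] H₁) - B ∘L Ci ∘L Bs with hLdef
  have hHeq : H = blk A B Bs C := by
    ext x
    refine (WithLp.equiv 2 (H₁ × H₂)).injective ?_
    rw [hH x, blk_apply]
  set U := blk (1 : H₁ →L[ℂ] H₁) (B ∘L Ci) 0 (1 : H₂ →L[ℂ] H₂) with hUdef
  set V := blk (1 : H₁ →L[ℂ] H₁) 0 (Ci ∘L Bs) (1 : H₂ →L[ℂ] H₂) with hVdef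
  set D := blk L 0 0 (C - lam • (1 : H₂ →L[ℂ] H₂)) with hDdef
  have hUD : U * D = blk L B 0 (C - lam • (1 : H₂ →L[ℂ] H₂)) := by
    rw [hUdef, hDdef, blk_mul]
    congr 1
    · rw [ContinuousLinearMap.comp_zero, add_zero, oneComp]
    · rw [ContinuousLinearMap.comp_zero, zero_add, ContinuousLinearMap.comp_assoc]
      show B ∘L (Ci * (C - lam • 1)) = B
      rw [hCi1, compOne]
    · rw [ContinuousLinearMap.zero_comp, ContinuousLinearMap.comp_zero, add_zero]
    · rw [ContinuousLinearMap.comp_zero, zero_add, oneComp]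
  have hUDV : U * D * V = blk (A - lam • (1 : H₁ →L[ℂ] H₁)) B Bs
      (C - lam • (1 : H₂ →L[ℂ] H₂)) := by
    rw [hUD, hVdef, blk_mul]
    congr 1
    · rw [compOne]
      show L + B ∘L (Ci ∘L Bs) = _
      rw [hLdef]
      have : B ∘L (Ci ∘L Bs) = B ∘L Ci ∘L Bs := rfl
      rw [this, sub_add_cancel]
    · rw [ContinuousLinearMap.comp_zero, zero_add, compOne]
    · rw [ContinuousLinearMap.zero_comp, zero_add, ← ContinuousLinearMap.comp_assoc]
      show ((C - lam • 1) * Ci) ∘L Bs = Bs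
      rw [hCi2, oneComp]
    · rw [ContinuousLinearMap.comp_zero, zero_add, compOne]
  have hfact : H - lam • 1 = U * D * V := by
    rw [hUDV, hHeq, ← blk_smul_one, blk_sub, sub_zero, sub_zero]
  have hU : IsUnit U := blk_tri_unit _
  have hV : IsUnit V := blk_tri_unit' _
  have key : IsUnit (H - lam • 1) ↔ IsUnit L := by
    constructor
    · intro h
      have h' : IsUnit (U * D * V) := hfact ▸ h
      have h'' := (hU.unit⁻¹.isUnit.mul h').mul hV.unit⁻¹.isUnit
      have e : (↑hU.unit⁻¹ : WithLp 2 (H₁ × H₂) →L[ℂ] WithLp 2 (H₁ × H₂)) * (U * D * V) *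
          ↑hV.unit⁻¹ = D := by
        rw [mul_assoc U D V, ← mul_assoc (↑hU.unit⁻¹ : WithLp 2 (H₁ × H₂) →L[ℂ] _) U (D * V),
          hU.val_inv_mul, one_mul, mul_assoc D V, hV.mul_val_inv, mul_one]
      exact blk_diag_unit_fst (e ▸ h'')
    · intro hL
      have hD : IsUnit D := blk_diag_unit hL hCu
      rw [hfact]
      exact (hU.mul hD).mul hV
  rw [spectrum.mem_iff, Algebra.algebraMap_eq_smul_one, spectrum.zero_mem_iff]
  have hsw : IsUnit (lam • (1 : WithLp 2 (H₁ × H₂) →L[ℂ] WithLp 2 (H₁ × H₂)) - H) ↔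
      IsUnit (H - lam • 1) := by
    constructor <;> intro h <;> simpa [neg_sub] using h.neg
  rw [hsw, key]
end
end

section
/- Let w0 ∈ ℝ and let v1, w1 : T^ν → ℝ be continuous. Let h be the bounded self-adjoint operator on ℂ ⊕ L²(T^ν) defined by h(f0, f1) = (w0 f0 + ∫ v1(s) f1(s) ds, p ↦ v1(p) f0 + w1(p) f1(p)). Then the discrete spectrum of h outside the interval [min w1, max w1] consists exactly of the solutions z of the scalar equation w0 − z − ∫_{T^ν} v1(s)²/(w1(s) − z) ds = 0 with z ∉ [min w1, max w1]. -/
open MeasureTheory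

noncomputable section

lemma torus_cont_integrable {ν : ℕ} {f : Torus ν → ℂ} (hf : Continuous f) :
    Integrable f (volume : Measure (Torus ν)) :=
  hf.integrable_of_hasCompactSupport (HasCompactSupport.of_compactSpace f)

/-- Discrete spectrum of the rank-one Friedrichs model on `ℂ ⊕ L²(T^ν)` outside the interval
`[min w1, max w1]`: `z` is an eigenvalue iff `w0 − z − ∫ v1(s)²/(w1(s) − z) ds = 0`. -/
theorem discrete_spectrum_friedrichs_model
    (ν : ℕ) (w0 : ℝ) (v1 w1 : Torus ν → ℝ)
    (hv1 : Continuous v1) (hw1 : Continuous w1)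
    (h : (ℂ × L2T ν) →L[ℂ] (ℂ × L2T ν))
    (hact : ∀ f : ℂ × L2T ν,
      (h f).1 = (w0 : ℂ) * f.1 + ∫ s, (v1 s : ℂ) * f.2 s ∧
      ((h f).2 : Torus ν → ℂ) =ᵐ[volume]
        fun p => (v1 p : ℂ) * f.1 + (w1 p : ℂ) * f.2 p)
    (z : ℂ) (hz : z ∉ Complex.ofReal '' Set.Icc (⨅ p, w1 p) (⨆ p, w1 p)) :
    (∃ f : ℂ × L2T ν, f ≠ 0 ∧ h f = z • f) ↔
      (w0 : ℂ) - z - ∫ s, (v1 s : ℂ) ^ 2 / ((w1 s : ℂ) - z) = 0 := by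
  -- the denominator never vanishes
  have hne : ∀ p : Torus ν, ((w1 p : ℂ) - z) ≠ 0 := by
    intro p hp
    exact hz ⟨w1 p, ⟨ciInf_le (isCompact_range hw1).bddBelow p,
      le_ciSup (isCompact_range hw1).bddAbove p⟩, sub_eq_zero.mp hp⟩
  set g : Torus ν → ℂ := fun p => -(v1 p : ℂ) / ((w1 p : ℂ) - z) with hg_def
  have hgc : Continuous g :=
    ((Complex.continuous_ofReal.comp hv1).neg).div
      ((Complex.continuous_ofReal.comp hw1).sub continuous_const) hne
  -- key pointwise identity
  have hkey : ∀ p : Torus ν, (v1 p : ℂ) + (w1 p : ℂ) * g p = z * g p := by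
    intro p
    have := hne p
    simp only [hg_def]
    field_simp
    ring
  have hvg : ∀ p : Torus ν, (v1 p : ℂ) * g p = -((v1 p : ℂ) ^ 2 / ((w1 p : ℂ) - z)) := by
    intro p
    have := hne p
    simp only [hg_def]
    field_simp
  set I : ℂ := ∫ s, (v1 s : ℂ) ^ 2 / ((w1 s : ℂ) - z) with hI_def
  have hvg_int : ∫ s, (v1 s : ℂ) * g s = -I := by
    rw [hI_def, ← integral_neg]
    exact integral_congr_ae (Filter.Eventually.of_forall hvg)
  constructor
  · rintro ⟨⟨f0, f1⟩, hf, heq⟩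
    obtain ⟨h1, h2⟩ := hact (f0, f1)
    have heq1 : (h (f0, f1)).1 = z * f0 := by rw [heq]; rfl
    have heq2 : (h (f0, f1)).2 = z • f1 := by rw [heq]; rfl
    -- a.e. identity for the second component
    have hae : (fun p => (v1 p : ℂ) * f0 + (w1 p : ℂ) * f1 p)
        =ᵐ[volume] fun p => z * f1 p := by
      have h3 : ((h (f0, f1)).2 : Torus ν → ℂ) =ᵐ[volume] fun p => z * f1 p := by
        rw [heq2]
        filter_upwards [Lp.coeFn_smul z f1] with p hp
        simpa using hp
      exact h2.symm.trans h3
    have hf1 : (f1 : Torus ν → ℂ) =ᵐ[volume] fun p => f0 * g p := by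
      filter_upwards [hae] with p hp
      simp only [hg_def]
      rw [← mul_div_assoc, eq_div_iff (hne p)]
      linear_combination hp
    by_cases hf0 : f0 = 0
    · exfalso
      apply hf
      have : f1 = 0 := by
        apply Lp.ext
        refine hf1.trans (Filter.EventuallyEq.trans (Filter.Eventually.of_forall ?_)
          (Lp.coeFn_zero ℂ 2 volume).symm)
        intro p
        simp [hf0]
      rw [Prod.ext_iff]
      exact ⟨hf0, this⟩
    · -- compute the integral
      have hint : ∫ s, (v1 s : ℂ) * f1 s = f0 * (-I) := by
      -- rewrite via the a.e. identity
        calc ∫ s, (v1 s : ℂ) * f1 s = ∫ s, (v1 s : ℂ) * (f0 * g s) := by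
              refine integral_congr_ae ?_
              filter_upwards [hf1] with p hp
              rw [hp]
          _ = f0 * ∫ s, (v1 s : ℂ) * g s := by
              rw [← integral_const_mul]
              exact integral_congr_ae (Filter.Eventually.of_forall fun p => by ring)
          _ = f0 * (-I) := by rw [hvg_int]
      rw [hint] at h1
      rw [heq1] at h1
      have h1' : z * f0 = (w0 : ℂ) * f0 + f0 * -I := h1
      have : ((w0 : ℂ) - z - I) * f0 = 0 := by linear_combination -h1'
      rcases mul_eq_zero.mp this with h' | h'
      · exact h'
      · exact absurd h' hf0
  · intro heq0
    -- bound for g, to get membership in L²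
    obtain ⟨C, hC⟩ := (isCompact_range hgc).isBounded.exists_norm_le
    have hmem : MemLp g 2 (volume : Measure (Torus ν)) :=
      MemLp.of_bound hgc.aestronglyMeasurable C
        (Filter.Eventually.of_forall fun x => hC _ ⟨x, rfl⟩)
    set F1 : L2T ν := hmem.toLp g with hF1_def
    have hF1 : (F1 : Torus ν → ℂ) =ᵐ[volume] g := MemLp.coeFn_toLp hmem
    refine ⟨(1, F1), ?_, ?_⟩
    · intro hc
      have : (1 : ℂ) = 0 := congrArg Prod.fst hc
      exact one_ne_zero this
    · obtain ⟨h1, h2⟩ := hact (1, F1)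
      have hi : ∫ s, (v1 s : ℂ) * F1 s = -I := by
        rw [← hvg_int]
        refine integral_congr_ae ?_
        filter_upwards [hF1] with p hp
        rw [hp]
      refine Prod.ext ?_ ?_
      · show (h (1, F1)).1 = z • (1 : ℂ)
        rw [h1, hi]
        simp only [smul_eq_mul, mul_one]
        linear_combination heq0
      · show (h (1, F1)).2 = z • F1
        apply Lp.ext
        refine h2.trans ?_
        have hsmul : ((z • F1 : L2T ν) : Torus ν → ℂ) =ᵐ[volume] fun p => z * F1 p := by
          filter_upwards [Lp.coeFn_smul z F1] with p hp
          simpa using hp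
        refine Filter.EventuallyEq.trans ?_ hsmul.symm
        filter_upwards [hF1] with p hp
        rw [hp]
        simpa using hkey p
end
end

section
/- Let (V_n) be a sequence of pairwise disjoint measurable subsets of T^ν of positive measure, and let G : T^ν × T^ν → ℂ be a bounded measurable function. Then there exists an orthonormal sequence (k_n) in L²(T^ν) with supp k_n ⊆ V_n and ∬_{V_n × V_m} G(p, q) k_n(p) k_m(q) dp dq = 0 for all n ≠ m. -/
open MeasureTheory

noncomputable section

namespace KillKernel

instance : NullSingletonClass (volume : Measure (AddCircle (2 * Real.pi))) := by
  constructor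
  intro x
  have h := AddCircle.volume_closedBall (T := 2 * Real.pi) (x := x) 0
  have h0 : min (2 * Real.pi) (2 * 0) = 0 := by
    rw [mul_zero]
    exact min_eq_right (by positivity)
  rw [Metric.closedBall_zero] at h
  rw [h, h0]
  simp

variable {ν : ℕ}

/-- The basic character on the torus (first coordinate). -/
def e (i0 : Fin ν) : Torus ν → ℂ := fun x => (AddCircle.toCircle (x i0) : ℂ)

lemma e_continuous (i0 : Fin ν) : Continuous (e i0) :=
  continuous_subtype_val.comp (AddCircle.continuous_toCircle.comp (continuous_apply i0))

lemma e_measurable (i0 : Fin ν) : Measurable (e i0) := (e_continuous i0).measurable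

lemma e_norm (i0 : Fin ν) (x : Torus ν) : ‖e i0 x‖ = 1 := by
  simpa [e] using Circle.norm_coe (AddCircle.toCircle (x i0))

lemma null_vanish (i0 : Fin ν) {m : ℕ} (c : Fin m → ℂ) (hc : c ≠ 0) :
    (volume : Measure (Torus ν)) {x | ∑ j, c j * (e i0 x) ^ (j : ℕ) = 0} = 0 := by
  obtain ⟨j₀, hj₀⟩ : ∃ j, c j ≠ 0 := by
    by_contra h; push_neg at h; exact hc (funext h)
  set Q : Polynomial ℂ := ∑ j : Fin m, Polynomial.C (c j) * Polynomial.X ^ (j : ℕ) with hQdef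
  have hQ : Q ≠ 0 := by
    intro h
    have hco : Q.coeff (j₀ : ℕ) = c j₀ := by
      rw [hQdef, Polynomial.finset_sum_coeff]
      rw [Finset.sum_eq_single j₀]
      · simp
      · intro j _ hj
        have : ((j₀ : ℕ) : ℕ) ≠ (j : ℕ) := fun hh => hj (Fin.val_injective hh).symm
        simp [Polynomial.coeff_C_mul, Polynomial.coeff_X_pow, this]
      · intro hj; exact absurd (Finset.mem_univ j₀) hj
    rw [h] at hco
    simp at hco
    exact hj₀ hco.symm
  have hfin : {z : ℂ | Q.IsRoot z}.Finite := Q.finite_setOf_isRoot hQ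
  have hinj : Function.Injective (fun a : AddCircle (2 * Real.pi) => (AddCircle.toCircle a : ℂ)) :=
    Circle.coe_injective.comp (AddCircle.injective_toCircle (by positivity))
  have hS : Set.Finite ((fun a : AddCircle (2 * Real.pi) => (AddCircle.toCircle a : ℂ)) ⁻¹'
      {z : ℂ | Q.IsRoot z}) := hfin.preimage hinj.injOn
  set S := (fun a : AddCircle (2 * Real.pi) => (AddCircle.toCircle a : ℂ)) ⁻¹' {z : ℂ | Q.IsRoot z}
  have hsub : {x : Torus ν | ∑ j, c j * (e i0 x) ^ (j : ℕ) = 0} ⊆ ⋃ a ∈ S, {x : Torus ν | x i0 = a} := by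
    intro x hx
    have heval : Q.eval (e i0 x) = ∑ j, c j * (e i0 x) ^ (j : ℕ) := by
      rw [hQdef, Polynomial.eval_finset_sum]; simp
    have : x i0 ∈ S := by
      simp only [S, Set.mem_preimage, Set.mem_setOf_eq, Polynomial.IsRoot]
      rw [show ((AddCircle.toCircle (x i0) : ℂ)) = e i0 x from rfl, heval]
      exact hx
    exact Set.mem_biUnion this rfl
  refine measure_mono_null hsub ?_
  refine (measure_biUnion_null_iff hS.countable).mpr ?_
  intro a _
  rw [MeasureTheory.volume_pi]
  exact Measure.pi_hyperplane (fun _ => (volume : Measure (AddCircle (2 * Real.pi)))) i0 a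

lemma exists_good (i0 : Fin ν) (V : Set (Torus ν)) (hV : MeasurableSet V)
    (hVpos : 0 < volume V) (m : ℕ) (f : Fin m → Torus ν → ℂ)
    (hf : ∀ i, Measurable (f i)) (hfb : ∀ i, ∃ C, ∀ x, ‖f i x‖ ≤ C) :
    ∃ g : L2T ν, ‖g‖ = 1 ∧ (∀ᵐ x, x ∉ V → (g : Torus ν → ℂ) x = 0) ∧
      ∀ i, ∫ x in V, (g : Torus ν → ℂ) x * f i x = 0 := by
  classical
  -- matrix of constraints
  set M : Matrix (Fin m) (Fin (m + 1)) ℂ :=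
    Matrix.of fun i j => ∫ x in V, (e i0 x) ^ (j : ℕ) * f i x with hMdef
  obtain ⟨c, hc0, hc⟩ : ∃ c : Fin (m + 1) → ℂ, c ≠ 0 ∧ M.mulVec c = 0 := by
    by_contra h
    push_neg at h
    have hinj : Function.Injective M.mulVecLin := by
      rw [← LinearMap.ker_eq_bot, LinearMap.ker_eq_bot']
      intro c hMc
      by_contra hc0
      exact (h c hc0) hMc
    have := LinearMap.finrank_le_finrank_of_injective hinj
    simp [Module.finrank_fintype_fun_eq_card] at this
  -- the function
  set φ : Torus ν → ℂ := fun x => ∑ j, c j * (e i0 x) ^ (j : ℕ) with hφdef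
  set g₀ : Torus ν → ℂ := V.indicator φ with hg₀def
  have hφmeas : Measurable φ := by
    apply Finset.measurable_sum
    intro j _
    exact (measurable_const.mul ((e_measurable i0).pow_const _))
  have hg₀meas : Measurable g₀ := hφmeas.indicator hV
  have hφbd : ∀ x, ‖φ x‖ ≤ ∑ j, ‖c j‖ := by
    intro x
    refine (norm_sum_le _ _).trans (Finset.sum_le_sum fun j _ => ?_)
    rw [norm_mul, norm_pow, e_norm]
    simp
  have hg₀bd : ∀ x, ‖g₀ x‖ ≤ ∑ j, ‖c j‖ := by
    intro x
    rw [hg₀def]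
    by_cases hx : x ∈ V
    · rw [Set.indicator_of_mem hx]; exact hφbd x
    · rw [Set.indicator_of_notMem hx]
      simp only [norm_zero]
      exact Finset.sum_nonneg fun j _ => norm_nonneg _
  have hg₀mem : MemLp g₀ 2 (volume : Measure (Torus ν)) :=
    MemLp.of_bound hg₀meas.aestronglyMeasurable _ (Filter.Eventually.of_forall hg₀bd)
  set g₁ : L2T ν := hg₀mem.toLp g₀ with hg₁def
  have hg₁ne : g₁ ≠ 0 := by
    intro h
    have h' : hg₀mem.toLp g₀ = (MemLp.zero : MemLp (0 : Torus ν → ℂ) 2 volume).toLp 0 := by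
      rw [MemLp.toLp_zero]; exact h
    have hae : g₀ =ᵐ[(volume : Measure (Torus ν))] 0 :=
      (MemLp.toLp_eq_toLp_iff hg₀mem MemLp.zero).mp h'
    have hnull : volume {x | g₀ x ≠ 0} = 0 := by
      have := hae
      rw [Filter.EventuallyEq, ae_iff] at this
      simpa using this
    have hsub : V \ {x : Torus ν | φ x = 0} ⊆ {x | g₀ x ≠ 0} := by
      intro x hx
      simp only [Set.mem_diff, Set.mem_setOf_eq] at hx
      simp only [Set.mem_setOf_eq, hg₀def, Set.indicator_of_mem hx.1]
      exact hx.2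
    have hpos : 0 < volume (V \ {x : Torus ν | φ x = 0}) := by
      rw [measure_diff_null (null_vanish i0 c hc0)]
      exact hVpos
    exact absurd (measure_mono_null hsub hnull) hpos.ne'
  have hnpos : 0 < ‖g₁‖ := norm_pos_iff.mpr hg₁ne
  set r : ℂ := (‖g₁‖ : ℂ)⁻¹ with hrdef
  refine ⟨r • g₁, ?_, ?_, ?_⟩
  · rw [norm_smul, hrdef]
    rw [norm_inv]
    simp only [Complex.norm_real, Real.norm_eq_abs, abs_of_pos hnpos]
    field_simp
  · have h₁ := Lp.coeFn_smul r g₁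
    have h₂ := MemLp.coeFn_toLp hg₀mem
    filter_upwards [h₁, h₂] with x hx1 hx2 hxV
    rw [hx1]
    simp only [Pi.smul_apply, smul_eq_mul]
    rw [← hg₁def] at hx2
    rw [hx2, hg₀def, Set.indicator_of_notMem hxV, mul_zero]
  · intro i
    have h₁ := Lp.coeFn_smul r g₁
    have h₂ := MemLp.coeFn_toLp hg₀mem
    have hae : ∀ᵐ x ∂(volume.restrict V),
        ((r • g₁ : L2T ν) : Torus ν → ℂ) x * f i x = r * (g₀ x * f i x) := by
      filter_upwards [ae_restrict_of_ae h₁, ae_restrict_of_ae h₂] with x hx1 hx2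
      rw [hx1]
      simp only [Pi.smul_apply, smul_eq_mul]
      rw [← hg₁def] at hx2
      rw [hx2]; ring
    rw [integral_congr_ae hae, integral_const_mul]
    have hint : ∫ x in V, g₀ x * f i x = 0 := by
      have heq : ∀ x ∈ V, g₀ x * f i x = ∑ j, c j * ((e i0 x) ^ (j : ℕ) * f i x) := by
        intro x hx
        rw [hg₀def, Set.indicator_of_mem hx, hφdef, Finset.sum_mul]
        congr 1; ext j; ring
      rw [setIntegral_congr_fun hV heq]
      obtain C := fun i => (hfb i).choose
      have hintg : ∀ j : Fin (m + 1), Integrable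
          (fun x => c j * ((e i0 x) ^ (j : ℕ) * f i x)) (volume.restrict V) := by
        intro j
        obtain ⟨C, hC⟩ := hfb i
        refine Integrable.mono' (integrable_const (‖c j‖ * max C 0)) ?_ ?_
        · exact ((measurable_const.mul (((e_measurable i0).pow_const _).mul
            (hf i)))).aestronglyMeasurable
        · refine Filter.Eventually.of_forall fun x => ?_
          rw [norm_mul, norm_mul, norm_pow, e_norm]
          simp only [one_pow, one_mul]
          exact mul_le_mul_of_nonneg_left ((hC x).trans (le_max_left _ _)) (norm_nonneg _)
      rw [integral_finset_sum _ fun j _ => hintg j]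
      have : ∀ j : Fin (m + 1), ∫ x in V, c j * ((e i0 x) ^ (j : ℕ) * f i x)
          = c j * M i j := by
        intro j
        rw [integral_const_mul]
        rfl
      rw [Finset.sum_congr rfl fun j _ => this j]
      have hMc := congrFun hc i
      simp only [Matrix.mulVec, dotProduct, Pi.zero_apply] at hMc
      rw [← hMc]
      exact Finset.sum_congr rfl fun j _ => mul_comm _ _
    rw [hint, mul_zero]



lemma coeFn_integrable (h : L2T ν) (W : Set (Torus ν)) :
    Integrable (fun q => (h : Torus ν → ℂ) q) (volume.restrict W) :=
  ((Lp.memLp h).integrable one_le_two).restrict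

lemma kernel_slice_meas (G : Torus ν × Torus ν → ℂ) (hG : Measurable G)
    (W : Set (Torus ν)) (h : L2T ν) :
    Measurable fun p : Torus ν => ∫ q in W, G (p, q) * (h : Torus ν → ℂ) q := by
  have hsm : StronglyMeasurable fun z : Torus ν × Torus ν => G z * (h : Torus ν → ℂ) z.2 :=
    hG.stronglyMeasurable.mul ((Lp.stronglyMeasurable h).comp_measurable measurable_snd)
  exact hsm.integral_prod_right'.measurable

lemma kernel_slice_bound (G : Torus ν × Torus ν → ℂ) (Cb : ℝ) (hGb : ∀ x, ‖G x‖ ≤ Cb)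
    (W : Set (Torus ν)) (h : L2T ν) :
    ∃ C, ∀ p : Torus ν, ‖∫ q in W, G (p, q) * (h : Torus ν → ℂ) q‖ ≤ C := by
  refine ⟨(max Cb 0) * ∫ q in W, ‖(h : Torus ν → ℂ) q‖, fun p => ?_⟩
  calc ‖∫ q in W, G (p, q) * (h : Torus ν → ℂ) q‖
      ≤ ∫ q in W, ‖G (p, q) * (h : Torus ν → ℂ) q‖ := norm_integral_le_integral_norm _
    _ ≤ ∫ q in W, (max Cb 0) * ‖(h : Torus ν → ℂ) q‖ := by
        apply integral_mono_of_nonneg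
        · exact Filter.Eventually.of_forall fun q => norm_nonneg _
        · exact ((coeFn_integrable h W).norm).const_mul _
        · refine Filter.Eventually.of_forall fun q => ?_
          show ‖G (p, q) * (h : Torus ν → ℂ) q‖ ≤ (max Cb 0) * ‖(h : Torus ν → ℂ) q‖
          rw [norm_mul]
          exact mul_le_mul_of_nonneg_right ((hGb _).trans (le_max_left _ _)) (norm_nonneg _)
    _ = (max Cb 0) * ∫ q in W, ‖(h : Torus ν → ℂ) q‖ := integral_const_mul _ _

lemma exists_good' (i0 : Fin ν) (V : Set (Torus ν)) (hV : MeasurableSet V)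
    (hVpos : 0 < volume V) (G : Torus ν × Torus ν → ℂ) (hG : Measurable G)
    (Cb : ℝ) (hGb : ∀ x, ‖G x‖ ≤ Cb)
    (n : ℕ) (W : Fin n → Set (Torus ν)) (h : Fin n → L2T ν) :
    ∃ g : L2T ν, ‖g‖ = 1 ∧ (∀ᵐ x, x ∉ V → (g : Torus ν → ℂ) x = 0) ∧
      (∀ i, ∫ x in V, (g : Torus ν → ℂ) x *
          ∫ q in W i, G (x, q) * (h i : Torus ν → ℂ) q = 0) ∧
      (∀ i, ∫ x in V, (g : Torus ν → ℂ) x *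
          ∫ q in W i, G (q, x) * (h i : Torus ν → ℂ) q = 0) := by
  have hG' : Measurable fun z : Torus ν × Torus ν => G (z.2, z.1) :=
    hG.comp measurable_swap
  have hGb' : ∀ z : Torus ν × Torus ν, ‖G (z.2, z.1)‖ ≤ Cb := fun z => hGb _
  set f : Fin (n + n) → Torus ν → ℂ := fun j =>
    if hj : (j : ℕ) < n then
      fun p => ∫ q in W ⟨j, hj⟩, G (p, q) * (h ⟨j, hj⟩ : Torus ν → ℂ) q
    else
      fun p => ∫ q in W ⟨(j : ℕ) - n, by omega⟩,
        G (q, p) * (h ⟨(j : ℕ) - n, by omega⟩ : Torus ν → ℂ) q with hfdef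
  have hfmeas : ∀ j, Measurable (f j) := by
    intro j
    rw [hfdef]
    by_cases hj : (j : ℕ) < n
    · simp only [dif_pos hj]
      exact kernel_slice_meas G hG _ _
    · simp only [dif_neg hj]
      exact kernel_slice_meas (fun z => G (z.2, z.1)) hG' _ _
  have hfbdd : ∀ j, ∃ C, ∀ x, ‖f j x‖ ≤ C := by
    intro j
    rw [hfdef]
    by_cases hj : (j : ℕ) < n
    · simp only [dif_pos hj]
      exact kernel_slice_bound G Cb hGb _ _
    · simp only [dif_neg hj]
      exact kernel_slice_bound (fun z => G (z.2, z.1)) Cb hGb' _ _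
  obtain ⟨g, h1, h2, h3⟩ := exists_good i0 V hV hVpos (n + n) f hfmeas hfbdd
  refine ⟨g, h1, h2, fun i => ?_, fun i => ?_⟩
  · have := h3 ⟨(i : ℕ), by omega⟩
    rw [hfdef] at this
    simpa only [dif_pos i.isLt, Fin.eta] using this
  · have := h3 ⟨n + (i : ℕ), by omega⟩
    rw [hfdef] at this
    have hlt : ¬ (n + (i : ℕ) < n) := by omega
    simpa only [hlt, dif_neg, Nat.add_sub_cancel_left, Fin.eta, not_false_iff] using this

def kseq (i0 : Fin ν) (V : ℕ → Set (Torus ν)) (hVmeas : ∀ n, MeasurableSet (V n))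
    (hVpos : ∀ n, 0 < volume (V n)) (G : Torus ν × Torus ν → ℂ) (hG : Measurable G)
    (Cb : ℝ) (hGb : ∀ x, ‖G x‖ ≤ Cb) : ℕ → L2T ν
  | n => Classical.choose (exists_good' i0 (V n) (hVmeas n) (hVpos n) G hG Cb hGb n
      (fun i => V i) (fun i : Fin n => kseq i0 V hVmeas hVpos G hG Cb hGb i))
  decreasing_by all_goals exact i.isLt

lemma kseq_eq (i0 : Fin ν) (V : ℕ → Set (Torus ν)) (hVmeas : ∀ n, MeasurableSet (V n))
    (hVpos : ∀ n, 0 < volume (V n)) (G : Torus ν × Torus ν → ℂ) (hG : Measurable G)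
    (Cb : ℝ) (hGb : ∀ x, ‖G x‖ ≤ Cb) (n : ℕ) :
    kseq i0 V hVmeas hVpos G hG Cb hGb n
      = Classical.choose (exists_good' i0 (V n) (hVmeas n) (hVpos n) G hG Cb hGb n
          (fun i => V i) (fun i : Fin n => kseq i0 V hVmeas hVpos G hG Cb hGb i)) := by
  conv_lhs => rw [kseq]

lemma kseq_spec (i0 : Fin ν) (V : ℕ → Set (Torus ν)) (hVmeas : ∀ n, MeasurableSet (V n))
    (hVpos : ∀ n, 0 < volume (V n)) (G : Torus ν × Torus ν → ℂ) (hG : Measurable G)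
    (Cb : ℝ) (hGb : ∀ x, ‖G x‖ ≤ Cb) (n : ℕ) :
    ‖kseq i0 V hVmeas hVpos G hG Cb hGb n‖ = 1 ∧
    (∀ᵐ x, x ∉ V n → (kseq i0 V hVmeas hVpos G hG Cb hGb n : Torus ν → ℂ) x = 0) ∧
    (∀ i : Fin n, ∫ x in V n, (kseq i0 V hVmeas hVpos G hG Cb hGb n : Torus ν → ℂ) x *
        ∫ q in V i, G (x, q) * (kseq i0 V hVmeas hVpos G hG Cb hGb i : Torus ν → ℂ) q = 0) ∧
    (∀ i : Fin n, ∫ x in V n, (kseq i0 V hVmeas hVpos G hG Cb hGb n : Torus ν → ℂ) x *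
        ∫ q in V i, G (q, x) * (kseq i0 V hVmeas hVpos G hG Cb hGb i : Torus ν → ℂ) q = 0) := by
  rw [kseq_eq]
  exact Classical.choose_spec (exists_good' i0 (V n) (hVmeas n) (hVpos n) G hG Cb hGb n
    (fun i => V i) (fun i : Fin n => kseq i0 V hVmeas hVpos G hG Cb hGb i))

end KillKernel

open KillKernel

/-- Given pairwise disjoint sets `Vₙ` of positive measure and a bounded measurable kernel `G`,
there is an orthonormal sequence `kₙ` supported in `Vₙ` with
`∬_{Vₙ×Vₘ} G(p,q) kₙ(p) kₘ(q) dp dq = 0` for `n ≠ m`. -/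
theorem exists_orthonormal_sequence_killing_kernel
    (ν : ℕ) (V : ℕ → Set (Torus ν))
    (hVmeas : ∀ n, MeasurableSet (V n))
    (hVdisj : Pairwise (Function.onFun Disjoint V))
    (hVpos : ∀ n, 0 < volume (V n))
    (G : Torus ν × Torus ν → ℂ)
    (hGmeas : Measurable G)
    (hGbdd : ∃ Cb : ℝ, ∀ x, ‖G x‖ ≤ Cb) :
    ∃ k : ℕ → L2T ν,
      Orthonormal ℂ k ∧
      (∀ n, ∀ᵐ p, p ∉ V n → (k n : Torus ν → ℂ) p = 0) ∧
      ∀ n m, n ≠ m →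
        ∫ p in V n, ∫ q in V m, G (p, q) * (k n : Torus ν → ℂ) p * (k m : Torus ν → ℂ) q = 0 := by
  rcases Nat.eq_zero_or_pos ν with hν | hν
  · exfalso
    subst hν
    obtain ⟨x, hx⟩ : (V 0).Nonempty := nonempty_of_measure_ne_zero (hVpos 0).ne'
    obtain ⟨y, hy⟩ : (V 1).Nonempty := nonempty_of_measure_ne_zero (hVpos 1).ne'
    have hxy : x = y := Subsingleton.elim x y
    exact Set.disjoint_left.mp (hVdisj (by norm_num : (0 : ℕ) ≠ 1)) hx (by rwa [hxy])
  obtain ⟨Cb, hGb⟩ := hGbdd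
  set i0 : Fin ν := ⟨0, hν⟩
  set k : ℕ → L2T ν := kseq i0 V hVmeas hVpos G hGmeas Cb hGb with hkdef
  have spec := fun n => kseq_spec i0 V hVmeas hVpos G hGmeas Cb hGb n
  refine ⟨k, ⟨fun n => (spec n).1, ?_⟩, fun n => (spec n).2.1, ?_⟩
  · intro n m hnm
    rw [MeasureTheory.L2.inner_def]
    apply integral_eq_zero_of_ae
    filter_upwards [(spec n).2.1, (spec m).2.1] with x h1 h2
    by_cases hx : x ∈ V n
    · have hx' : x ∉ V m := Set.disjoint_left.mp (hVdisj hnm) hx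
      rw [h2 hx']
      simp
    · rw [h1 hx]
      simp
  · intro n m hnm
    rcases lt_or_gt_of_ne hnm with h | h
    · -- n < m : use the second family of constraints for k m
      have hswap : ∫ p in V n, ∫ q in V m,
          G (p, q) * (k n : Torus ν → ℂ) p * (k m : Torus ν → ℂ) q
          = ∫ q in V m, ∫ p in V n,
            G (p, q) * (k n : Torus ν → ℂ) p * (k m : Torus ν → ℂ) q := by
        apply MeasureTheory.integral_integral_swap
        have hmain : Integrable (fun z : Torus ν × Torus ν =>
            ((max Cb 0) * ‖(k n : Torus ν → ℂ) z.1‖) * ‖(k m : Torus ν → ℂ) z.2‖)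
            ((volume.restrict (V n)).prod (volume.restrict (V m))) :=
          Integrable.mul_prod ((coeFn_integrable (k n) (V n)).norm.const_mul _)
            (coeFn_integrable (k m) (V m)).norm
        apply Integrable.mono' hmain
        · exact ((hGmeas.stronglyMeasurable.mul
            ((Lp.stronglyMeasurable (k n)).comp_measurable measurable_fst)).mul
            ((Lp.stronglyMeasurable (k m)).comp_measurable measurable_snd)).aestronglyMeasurable
        · refine Filter.Eventually.of_forall fun z => ?_
          simp only [Function.uncurry, norm_mul]
          have h1 : ‖G (z.1, z.2)‖ ≤ max Cb 0 := (hGb _).trans (le_max_left _ _)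
          have h2 : (0:ℝ) ≤ ‖(k n : Torus ν → ℂ) z.1‖ := norm_nonneg _
          have h3 : (0:ℝ) ≤ ‖(k m : Torus ν → ℂ) z.2‖ := norm_nonneg _
          exact mul_le_mul_of_nonneg_right (mul_le_mul_of_nonneg_right h1 h2) h3
      rw [hswap]
      have hpt : ∀ q, ∫ p in V n,
          G (p, q) * (k n : Torus ν → ℂ) p * (k m : Torus ν → ℂ) q
          = (k m : Torus ν → ℂ) q * ∫ p in V n, G (p, q) * (k n : Torus ν → ℂ) p := by
        intro q
        rw [← integral_const_mul]
        apply integral_congr_ae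
        exact Filter.Eventually.of_forall fun p => by ring
      rw [integral_congr_ae (Filter.Eventually.of_forall hpt)]
      exact (spec m).2.2.2 ⟨n, h⟩
    · -- m < n : use the first family of constraints for k n
      have hpt : ∀ p, ∫ q in V m,
          G (p, q) * (k n : Torus ν → ℂ) p * (k m : Torus ν → ℂ) q
          = (k n : Torus ν → ℂ) p * ∫ q in V m, G (p, q) * (k m : Torus ν → ℂ) q := by
        intro p
        rw [← integral_const_mul]
        apply integral_congr_ae
        exact Filter.Eventually.of_forall fun q => by ring
      rw [integral_congr_ae (Filter.Eventually.of_forall hpt)]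
      exact (spec n).2.2.1 ⟨m, h⟩
end
end
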